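/- Let λ > −1. Then there exist R > 0 and a function u : ℝ → ℝ that is twice continuously differentiable on [0, R], with u(0) = 0, u'(0) = 0, u''(0) = √(1 + λ), and satisfying, for every r ∈ (0, R]: u'(r)·u''(r) = r·(1 + u'(r)²)²·(1/√(1 + u'(r)²) + λ). -/

import Mathlib

open Set Real Filter

set_option maxHeartbeats 1000000

lemma quad_lower_aux {f G : ℝ → ℝ} {a b α : ℝ} (hba : b ≤ a) (hf0 : f 0 = 0)
    (hderiv : ∀ t ∈ Icc (0:ℝ) a, HasDerivWithinAt f (2 * t * G t) (Icc (0:ℝ) a) t)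
    (hα : ∀ t ∈ Icc (0:ℝ) b, α ≤ G t) :
    ∀ r ∈ Icc (0:ℝ) b, α * r ^ 2 ≤ f r := by
  intro r hr
  have hsub : Icc (0:ℝ) b ⊆ Icc 0 a := Icc_subset_Icc le_rfl hba
  have hcont : ContinuousOn f (Icc (0:ℝ) b) := fun t ht =>
    ((hderiv t (hsub ht)).continuousWithinAt).mono hsub
  have hmono : MonotoneOn (fun x => f x - α * x ^ 2) (Icc (0:ℝ) b) := by
    apply monotoneOn_of_hasDerivWithinAt_nonneg (convex_Icc _ _)
      (f := fun x => f x - α * x ^ 2) (f' := fun x => 2 * x * (G x - α))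
      (hcont.sub ((continuous_const.mul (continuous_pow 2)).continuousOn))
    · intro x hx
      rw [interior_Icc] at hx ⊢
      have hx' : x ∈ Icc (0:ℝ) a := ⟨hx.1.le, hx.2.le.trans hba⟩
      have hsub2 : Ioo (0:ℝ) b ⊆ Icc (0:ℝ) a := fun y hy => ⟨hy.1.le, hy.2.le.trans hba⟩
      have h1 : HasDerivWithinAt f (2 * x * G x) (Ioo (0:ℝ) b) x :=
        (hderiv x hx').mono hsub2
      have h2 : HasDerivWithinAt (fun x : ℝ => α * x ^ 2) (α * (2 * x)) (Ioo (0:ℝ) b) x := by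
        simpa using ((hasDerivAt_pow 2 x).const_mul α).hasDerivWithinAt
      exact (h1.sub h2).congr_deriv (by ring)
    · intro x hx
      rw [interior_Icc] at hx
      have := hα x ⟨hx.1.le, hx.2.le⟩
      nlinarith [hx.1.le]
  have h0 : (0:ℝ) ∈ Icc (0:ℝ) b := ⟨le_rfl, hr.1.trans hr.2⟩
  have := hmono h0 hr hr.1
  simp only [hf0] at this
  linarith

lemma quad_upper_aux {f G : ℝ → ℝ} {a b β : ℝ} (hba : b ≤ a) (hf0 : f 0 = 0)
    (hderiv : ∀ t ∈ Icc (0:ℝ) a, HasDerivWithinAt f (2 * t * G t) (Icc (0:ℝ) a) t)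
    (hβ : ∀ t ∈ Icc (0:ℝ) b, G t ≤ β) :
    ∀ r ∈ Icc (0:ℝ) b, f r ≤ β * r ^ 2 := by
  intro r hr
  have hsub : Icc (0:ℝ) b ⊆ Icc 0 a := Icc_subset_Icc le_rfl hba
  have hcont : ContinuousOn f (Icc (0:ℝ) b) := fun t ht =>
    ((hderiv t (hsub ht)).continuousWithinAt).mono hsub
  have hmono : MonotoneOn (fun x => β * x ^ 2 - f x) (Icc (0:ℝ) b) := by
    apply monotoneOn_of_hasDerivWithinAt_nonneg (convex_Icc _ _)
      (f := fun x => β * x ^ 2 - f x) (f' := fun x => 2 * x * (β - G x))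
      (((continuous_const.mul (continuous_pow 2)).continuousOn).sub hcont)
    · intro x hx
      rw [interior_Icc] at hx ⊢
      have hx' : x ∈ Icc (0:ℝ) a := ⟨hx.1.le, hx.2.le.trans hba⟩
      have hsub2 : Ioo (0:ℝ) b ⊆ Icc (0:ℝ) a := fun y hy => ⟨hy.1.le, hy.2.le.trans hba⟩
      have h1 : HasDerivWithinAt f (2 * x * G x) (Ioo (0:ℝ) b) x :=
        (hderiv x hx').mono hsub2
      have h2 : HasDerivWithinAt (fun x : ℝ => β * x ^ 2) (β * (2 * x)) (Ioo (0:ℝ) b) x := by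
        simpa using ((hasDerivAt_pow 2 x).const_mul β).hasDerivWithinAt
      exact (h2.sub h1).congr_deriv (by ring)
    · intro x hx
      rw [interior_Icc] at hx
      have := hβ x ⟨hx.1.le, hx.2.le⟩
      nlinarith [hx.1.le]
  have h0 : (0:ℝ) ∈ Icc (0:ℝ) b := ⟨le_rfl, hr.1.trans hr.2⟩
  have := hmono h0 hr hr.1
  simp only [hf0] at this
  linarith



/-- For `λ > −1` there exist `R > 0` and a `C²` function `u` on `[0, R]`
with `u(0) = u'(0) = 0`, `u''(0) = √(1 + λ)`, satisfying
`u' u'' = r (1 + u'²)² (1/√(1 + u'²) + λ)` on `(0, R]`. -/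
theorem exists_rotational_translator_orthogonal_to_axis
    (lam : ℝ) (hlam : -1 < lam) :
    ∃ R : ℝ, 0 < R ∧ ∃ u u' u'' : ℝ → ℝ,
      (∀ r ∈ Set.Icc (0 : ℝ) R, HasDerivWithinAt u (u' r) (Set.Icc (0 : ℝ) R) r) ∧
      (∀ r ∈ Set.Icc (0 : ℝ) R, HasDerivWithinAt u' (u'' r) (Set.Icc (0 : ℝ) R) r) ∧
      ContinuousOn u'' (Set.Icc (0 : ℝ) R) ∧
      u 0 = 0 ∧ u' 0 = 0 ∧ u'' 0 = Real.sqrt (1 + lam) ∧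
      (∀ r ∈ Set.Ioc (0 : ℝ) R,
        u' r * u'' r =
          r * (1 + u' r ^ 2) ^ 2 * (1 / Real.sqrt (1 + u' r ^ 2) + lam)) := by
  set μ : ℝ := 1 + lam with hμdef
  have hμ : 0 < μ := by simp only [hμdef]; linarith
  set g₀ : ℝ → ℝ := fun x => (1 + x) ^ 2 * (1 / Real.sqrt (1 + x) + lam) with hg₀def
  have hg₀cont : ∀ y : ℝ, -1 < y → ContinuousAt g₀ y := by
    intro y hy
    have h1 : (0:ℝ) < 1 + y := by linarith
    have hs : Real.sqrt (1 + y) ≠ 0 := by positivity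
    have hc1 : ContinuousAt (fun x : ℝ => Real.sqrt (1 + x)) y :=
      Real.continuous_sqrt.continuousAt.comp (continuousAt_const.add continuousAt_id)
    exact ((continuousAt_const.add continuousAt_id).pow 2).mul
      ((continuousAt_const.div hc1 hs).add continuousAt_const)
  have hg₀0 : g₀ 0 = μ := by
    simp [hg₀def, hμdef, Real.sqrt_one]
  have hg₀diff : ContDiffAt ℝ 1 g₀ 0 := by
    have h1 : ContDiffAt ℝ 1 (fun x : ℝ => 1 + x) 0 := contDiffAt_const.add contDiffAt_id
    have h2 : ContDiffAt ℝ 1 (fun x : ℝ => Real.sqrt (1 + x)) 0 :=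
      (Real.contDiffAt_sqrt (by norm_num : (1:ℝ) + 0 ≠ 0)).comp 0 h1
    have h3 : ContDiffAt ℝ 1 (fun x : ℝ => 1 / Real.sqrt (1 + x) + lam) 0 :=
      (contDiffAt_const.div h2 (by norm_num)).add contDiffAt_const
    exact (h1.pow 2).mul h3
  -- Lipschitz constant for g₀ near 0
  obtain ⟨K, tset, htset, hlipg⟩ := hg₀diff.exists_lipschitzOnWith
  obtain ⟨δ₁, hδ₁pos, hδ₁⟩ := Metric.mem_nhds_iff.mp htset
  obtain ⟨δ₂, hδ₂pos, hδ₂⟩ := Metric.continuousAt_iff.mp (hg₀cont 0 (by linarith)) (μ/2) (by positivity)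
  set δ : ℝ := min (δ₁/2) (δ₂/2) with hδdef
  have hδpos : 0 < δ := lt_min (by positivity) (by positivity)
  have hδball : ∀ x : ℝ, x ∈ Icc (0:ℝ) δ → x ∈ Metric.ball (0:ℝ) δ₁ := by
    intro x hx
    rw [Metric.mem_ball, Real.dist_eq, sub_zero, abs_of_nonneg hx.1]
    calc x ≤ δ := hx.2
    _ ≤ δ₁/2 := min_le_left _ _
    _ < δ₁ := by linarith
  have hδ₂' : ∀ x : ℝ, x ∈ Icc (0:ℝ) δ → |g₀ x - μ| < μ/2 := by
    intro x hx
    have : dist x 0 < δ₂ := by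
      rw [Real.dist_eq, sub_zero, abs_of_nonneg hx.1]
      calc x ≤ δ := hx.2
      _ ≤ δ₂/2 := min_le_right _ _
      _ < δ₂ := by linarith
    have := hδ₂ this
    rwa [Real.dist_eq, hg₀0] at this
  set clamp : ℝ → ℝ := fun x => max 0 (min x δ) with hclampdef
  have hclampmem : ∀ x, clamp x ∈ Icc (0:ℝ) δ := fun x =>
    ⟨le_max_left _ _, max_le hδpos.le (min_le_right _ _)⟩
  have hclampid : ∀ x ∈ Icc (0:ℝ) δ, clamp x = x := by
    intro x hx
    simp only [hclampdef]
    rw [min_eq_left hx.2, max_eq_right hx.1]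
  have hclamplip : ∀ x y, |clamp x - clamp y| ≤ |x - y| := by
    intro x y
    calc |clamp x - clamp y| ≤ max |(0:ℝ) - 0| |min x δ - min y δ| :=
          abs_max_sub_max_le_max _ _ _ _
      _ = |min x δ - min y δ| := by simp
      _ ≤ max |x - y| |δ - δ| := abs_min_sub_min_le_max _ _ _ _
      _ = |x - y| := by simp
  set gc : ℝ → ℝ := fun x => g₀ (clamp x) with hgcdef
  have hgcb : ∀ x, μ/2 ≤ gc x ∧ gc x ≤ 3*μ/2 := by
    intro x
    have := abs_lt.mp (hδ₂' (clamp x) (hclampmem x))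
    constructor <;> simp only [hgcdef] <;> linarith [this.1, this.2]
  have hgclip : ∀ x y, dist (gc x) (gc y) ≤ K * dist x y := by
    intro x y
    have h1 := (lipschitzOnWith_iff_dist_le_mul.mp hlipg) (clamp x)
      (hδ₁ (hδball _ (hclampmem x))) (clamp y) (hδ₁ (hδball _ (hclampmem y)))
    refine h1.trans ?_
    have h2 : dist (clamp x) (clamp y) ≤ dist x y := by
      rw [Real.dist_eq, Real.dist_eq]; exact hclamplip x y
    exact mul_le_mul_of_nonneg_left h2 K.2
  -- choose the time interval
  obtain ⟨e, hepos, hemul⟩ : ∃ e : ℝ, 0 < e ∧ e * (1 + 3*μ/2) = δ :=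
    ⟨δ / (1 + 3*μ/2), by positivity, div_mul_cancel₀ _ (by positivity)⟩
  set a : ℝ := min 1 e with hadef
  have ha0 : 0 < a := lt_min one_pos hepos
  have ha1 : a ≤ 1 := min_le_left _ _
  have hae : a ≤ e := min_le_right _ _
  have haδ : 3*μ/2 * a^2 ≤ δ := by
    have h1 : a^2 ≤ e := by nlinarith
    nlinarith
  -- Picard–Lindelöf
  have hpl : IsPicardLindelof (fun t x => 2 * t * gc x) (tmin := 0) (tmax := a)
      ⟨0, left_mem_Icc.mpr ha0.le⟩ 0 (⟨3*μ, by positivity⟩ : NNReal) 0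
      (⟨3*μ, by positivity⟩ : NNReal) (2 * K) := by
    constructor
    · intro t ht
      rw [lipschitzOnWith_iff_dist_le_mul]
      intro x _ y _
      have h1 := hgclip x y
      have h2 : (0:ℝ) ≤ dist x y := dist_nonneg
      have h3 : (0:ℝ) ≤ K := K.2
      have hK : ((2 * K : NNReal) : ℝ) = 2 * (K:ℝ) := by push_cast; ring
      rw [hK, Real.dist_eq] at *
      have h4 : |2 * t * gc x - 2 * t * gc y| = 2 * t * |gc x - gc y| := by
        rw [show 2 * t * gc x - 2 * t * gc y = (2*t) * (gc x - gc y) by ring, abs_mul,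
          abs_of_nonneg (by linarith [ht.1] : (0:ℝ) ≤ 2 * t)]
      rw [h4]
      have ht1 : t ≤ 1 := ht.2.trans ha1
      nlinarith [abs_nonneg (gc x - gc y), ht.1]
    · intro x _
      exact ((continuous_const.mul continuous_id).mul continuous_const).continuousOn
    · intro t ht x _
      have h1 := (hgcb x).1
      have h2 := (hgcb x).2
      rw [Real.norm_eq_abs, abs_of_nonneg (by nlinarith [ht.1] : (0:ℝ) ≤ 2 * t * gc x)]
      have ht1 : t ≤ 1 := ht.2.trans ha1
      show _ ≤ 3*μ
      nlinarith [ht.1]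
    · have : max (a - 0) (0 - 0) = a := by
        rw [sub_zero, sub_zero, max_eq_left ha0.le]
      show 3*μ * max (a - 0) (0 - 0) ≤ 3*μ - 0
      rw [this]
      nlinarith
  obtain ⟨f, hf0, hfd⟩ := hpl.exists_eq_forall_mem_Icc_hasDerivWithinAt₀
  -- basic bounds on the solution
  have hfd' : ∀ t ∈ Icc (0:ℝ) a, HasDerivWithinAt f (2 * t * gc (f t)) (Icc (0:ℝ) a) t := hfd
  have hlow : ∀ r ∈ Icc (0:ℝ) a, μ/2 * r ^ 2 ≤ f r :=
    quad_lower_aux le_rfl hf0 hfd' (fun t _ => (hgcb (f t)).1)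
  have hupp : ∀ r ∈ Icc (0:ℝ) a, f r ≤ 3*μ/2 * r ^ 2 :=
    quad_upper_aux le_rfl hf0 hfd' (fun t _ => (hgcb (f t)).2)
  have hfδ : ∀ r ∈ Icc (0:ℝ) a, f r ∈ Icc (0:ℝ) δ := by
    intro r hr
    have h1 := hlow r hr
    have h2 := hupp r hr
    have h3 : r^2 ≤ a^2 := by nlinarith [hr.1, hr.2]
    have h4 : 3*μ/2 * r^2 ≤ 3*μ/2 * a^2 := by
      apply mul_le_mul_of_nonneg_left h3 (by positivity)
    constructor
    · nlinarith [hr.1]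
    · linarith
  have hgcf : ∀ r ∈ Icc (0:ℝ) a, gc (f r) = g₀ (f r) := by
    intro r hr
    simp only [hgcdef]
    rw [hclampid _ (hfδ r hr)]
  -- the limit f t / t² → μ
  have hT : Tendsto (fun t => f t / t ^ 2) (nhdsWithin 0 (Ioc (0:ℝ) a)) (nhds μ) := by
    rw [Metric.tendsto_nhdsWithin_nhds]
    intro ε hε
    obtain ⟨δε, hδεpos, hδε⟩ := Metric.continuousAt_iff.mp (hg₀cont 0 (by linarith)) (ε/2) (by positivity)
    obtain ⟨e', he'pos, he'mul⟩ : ∃ e' : ℝ, 0 < e' ∧ e' * (2 * (1 + 3*μ/2)) = δε :=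
      ⟨δε / (2 * (1 + 3*μ/2)), by positivity, div_mul_cancel₀ _ (by positivity)⟩
    set b : ℝ := min a e' with hbdef
    have hb0 : 0 < b := lt_min ha0 he'pos
    have hba : b ≤ a := min_le_left _ _
    have hfb : ∀ t ∈ Icc (0:ℝ) b, dist (f t) 0 < δε := by
      intro t ht
      have ht' : t ∈ Icc (0:ℝ) a := ⟨ht.1, ht.2.trans hba⟩
      have h1 := hlow t ht'
      have h2 := hupp t ht'
      have h3 : t^2 ≤ b^2 := by nlinarith [ht.1, ht.2]
      have hb1 : b ≤ 1 := hba.trans ha1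
      have hbe : b ≤ e' := min_le_right _ _
      have h4 : b^2 ≤ e' := by nlinarith
      rw [Real.dist_eq, sub_zero, abs_of_nonneg (by nlinarith [ht.1] : (0:ℝ) ≤ f t)]
      nlinarith
    have hGlow : ∀ t ∈ Icc (0:ℝ) b, μ - ε/2 ≤ gc (f t) := by
      intro t ht
      have ht' : t ∈ Icc (0:ℝ) a := ⟨ht.1, ht.2.trans hba⟩
      rw [hgcf t ht']
      have := hδε (hfb t ht)
      rw [Real.dist_eq, hg₀0] at this
      have := abs_lt.mp this
      linarith [this.1]
    have hGupp : ∀ t ∈ Icc (0:ℝ) b, gc (f t) ≤ μ + ε/2 := by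
      intro t ht
      have ht' : t ∈ Icc (0:ℝ) a := ⟨ht.1, ht.2.trans hba⟩
      rw [hgcf t ht']
      have := hδε (hfb t ht)
      rw [Real.dist_eq, hg₀0] at this
      have := abs_lt.mp this
      linarith [this.2]
    have hlow' := quad_lower_aux hba hf0 hfd' hGlow
    have hupp' := quad_upper_aux hba hf0 hfd' hGupp
    refine ⟨b, hb0, ?_⟩
    intro x hx hdist
    rw [Real.dist_eq, sub_zero, abs_of_nonneg hx.1.le] at hdist
    have hxb : x ∈ Icc (0:ℝ) b := ⟨hx.1.le, hdist.le⟩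
    have h1 := hlow' x hxb
    have h2 := hupp' x hxb
    have hx2 : (0:ℝ) < x^2 := pow_pos hx.1 2
    have h1' : μ - ε/2 ≤ f x / x^2 := (le_div_iff₀ hx2).mpr h1
    have h2' : f x / x^2 ≤ μ + ε/2 := (div_le_iff₀ hx2).mpr h2
    rw [Real.dist_eq, abs_lt]
    constructor <;> linarith
  -- derived limits
  have htend0 : Tendsto f (nhdsWithin 0 (Ioc (0:ℝ) a)) (nhds 0) := by
    have h1 : Tendsto (fun t : ℝ => t ^ 2) (nhdsWithin 0 (Ioc (0:ℝ) a)) (nhds 0) := by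
      have h := (continuous_pow 2).tendsto (0:ℝ)
      rw [show (0:ℝ)^2 = 0 by norm_num] at h
      exact h.mono_left nhdsWithin_le_nhds
    have h2 := hT.mul h1
    rw [mul_zero] at h2
    refine h2.congr' ?_
    filter_upwards [eventually_mem_nhdsWithin] with t ht
    exact div_mul_cancel₀ _ (pow_ne_zero 2 (ne_of_gt ht.1))
  have hgtend : Tendsto (fun t => g₀ (f t)) (nhdsWithin 0 (Ioc (0:ℝ) a)) (nhds μ) := by
    have := ((hg₀cont 0 (by linarith)).tendsto).comp htend0
    rwa [hg₀0] at this
  have hsq : Tendsto (fun t => Real.sqrt (f t / t ^ 2)) (nhdsWithin 0 (Ioc (0:ℝ) a))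
      (nhds (Real.sqrt μ)) :=
    (Real.continuous_sqrt.continuousAt.tendsto).comp hT
  have hsqμ : Real.sqrt μ ≠ 0 := by positivity
  -- definitions
  have hfc : ContinuousOn f (Icc (0:ℝ) a) := fun t ht => (hfd t ht).continuousWithinAt
  set u' : ℝ → ℝ := fun r => Real.sqrt (f (max 0 (min r a))) with hu'def
  set u : ℝ → ℝ := fun r => ∫ t in (0:ℝ)..r, u' t with hudef
  set u'' : ℝ → ℝ := fun r => if r = 0 then Real.sqrt μ else r * g₀ (f r) / Real.sqrt (f r)
    with hu''def
  have hu'eq : ∀ r ∈ Icc (0:ℝ) a, u' r = Real.sqrt (f r) := by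
    intro r hr
    simp only [hu'def]
    rw [min_eq_left hr.2, max_eq_right hr.1]
  have hu'cont : Continuous u' := by
    have hclA : Continuous (fun r : ℝ => max 0 (min r a)) :=
      continuous_const.max (continuous_id.min continuous_const)
    have h1 : Continuous (fun r : ℝ => f (max 0 (min r a))) :=
      hfc.comp_continuous hclA (fun x => ⟨le_max_left _ _, max_le ha0.le (min_le_right _ _)⟩)
    exact Real.continuous_sqrt.comp h1
  have hu'0 : u' 0 = 0 := by
    simp only [hu'def]
    rw [min_eq_left ha0.le, max_self, hf0, Real.sqrt_zero]
  have hfpos : ∀ r, 0 < r → r ≤ a → 0 < f r := by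
    intro r h0 h1
    have := hlow r ⟨h0.le, h1⟩
    have h2 : 0 < μ/2 * r^2 := by positivity
    linarith
  refine ⟨a, ha0, u, u', u'', ?_, ?_, ?_, ?_, hu'0, ?_, ?_⟩
  · -- derivative of u
    intro r hr
    exact (intervalIntegral.integral_hasDerivAt_right (hu'cont.intervalIntegrable _ _)
      (hu'cont.stronglyMeasurableAtFilter _ _) hu'cont.continuousAt).hasDerivWithinAt
  · -- derivative of u'
    intro r hr
    rcases eq_or_lt_of_le hr.1 with h0 | h0
    · -- r = 0
      subst h0
      rw [hasDerivWithinAt_iff_tendsto_slope, Set.Icc_diff_left]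
      have hval : u'' 0 = Real.sqrt μ := by simp [hu''def]
      rw [hval]
      refine hsq.congr' ?_
      filter_upwards [eventually_mem_nhdsWithin] with t ht
      have ht' : t ∈ Icc (0:ℝ) a := ⟨ht.1.le, ht.2⟩
      have hft : (0:ℝ) ≤ f t := (hfδ t ht').1
      rw [slope_def_field, hu'0, hu'eq t ht', sub_zero, sub_zero,
        Real.sqrt_div hft, Real.sqrt_sq ht.1.le]
    · -- r > 0
      have hfr : 0 < f r := hfpos r h0 hr.2
      have h1 : HasDerivWithinAt f (2 * r * g₀ (f r)) (Icc (0:ℝ) a) r := by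
        rw [← hgcf r hr]; exact hfd r hr
      have h2 := (Real.hasDerivAt_sqrt (ne_of_gt hfr)).comp_hasDerivWithinAt r h1
      have h3 : HasDerivWithinAt u'
          (1 / (2 * Real.sqrt (f r)) * (2 * r * g₀ (f r))) (Icc (0:ℝ) a) r :=
        h2.congr (fun y hy => hu'eq y hy) (hu'eq r hr)
      have hval : u'' r = 1 / (2 * Real.sqrt (f r)) * (2 * r * g₀ (f r)) := by
        simp only [hu''def]
        rw [if_neg h0.ne']
        have hsf : Real.sqrt (f r) ≠ 0 := by positivity
        field_simp
      rw [hval]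
      exact h3
  · -- continuity of u''
    intro r hr
    rcases eq_or_lt_of_le hr.1 with h0 | h0
    · subst h0
      have hIns : insert (0:ℝ) (Ioc 0 a) = Icc 0 a := by
        rw [← Set.Icc_diff_left, Set.insert_diff_singleton,
          Set.insert_eq_self.mpr (left_mem_Icc.mpr ha0.le)]
      rw [← hIns, continuousWithinAt_insert_self]
      have hval : u'' 0 = Real.sqrt μ := by simp [hu''def]
      have htend : Tendsto u'' (nhdsWithin 0 (Ioc (0:ℝ) a)) (nhds (Real.sqrt μ)) := by
        have hdiv := hgtend.div hsq hsqμ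
        rw [Real.div_sqrt] at hdiv
        refine hdiv.congr' ?_
        filter_upwards [eventually_mem_nhdsWithin] with t ht
        have hft : 0 < f t := hfpos t ht.1 ht.2
        simp only [hu''def, Pi.div_apply]
        rw [if_neg ht.1.ne', Real.sqrt_div hft.le, Real.sqrt_sq ht.1.le,
          div_div_eq_mul_div]
        ring
      show Tendsto u'' (nhdsWithin 0 (Ioc (0:ℝ) a)) (nhds (u'' 0))
      rw [hval]
      exact htend
    · have hfr : 0 < f r := hfpos r h0 hr.2
      have hsf : Real.sqrt (f r) ≠ 0 := by positivity
      have hφ : ContinuousWithinAt (fun t => t * g₀ (f t) / Real.sqrt (f t))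
          (Icc (0:ℝ) a) r := by
        have hf1 : ContinuousWithinAt f (Icc (0:ℝ) a) r := hfc r hr
        have hg1 : ContinuousWithinAt (fun t => g₀ (f t)) (Icc (0:ℝ) a) r :=
          (hg₀cont (f r) (by linarith)).comp_continuousWithinAt hf1
        have hs1 : ContinuousWithinAt (fun t => Real.sqrt (f t)) (Icc (0:ℝ) a) r :=
          Real.continuous_sqrt.continuousAt.comp_continuousWithinAt hf1
        exact (continuousWithinAt_id.mul hg1).div hs1 hsf
      apply hφ.congr_of_eventuallyEq
      · filter_upwards [(eventually_ne_nhds h0.ne').filter_mono nhdsWithin_le_nhds] with t ht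
        simp only [hu''def]
        rw [if_neg ht]
      · simp only [hu''def]
        rw [if_neg h0.ne']
  · simp [hudef]
  · simp [hu''def, hμdef]
  · -- the ODE
    intro r hr
    have hr' : r ∈ Icc (0:ℝ) a := ⟨hr.1.le, hr.2⟩
    have hfr : 0 < f r := hfpos r hr.1 hr.2
    have hsf : Real.sqrt (f r) ≠ 0 := by positivity
    have h1 : u' r = Real.sqrt (f r) := hu'eq r hr'
    have h2 : u'' r = r * g₀ (f r) / Real.sqrt (f r) := by
      simp only [hu''def]
      rw [if_neg hr.1.ne']
    rw [h1, h2, Real.sq_sqrt hfr.le, mul_comm (Real.sqrt (f r)), div_mul_cancel₀ _ hsf]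
    simp only [hg₀def]
    ring
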